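/- arXiv:2201.11026 — 2 statements merged into one kernel-verified Lean document; each statement's English description precedes it below -/
import Mathlib

section
/- Let f(x₀,x₁,x₂) = a₀x₀ + a₁x₁ + a₂x₂ + a₅x₀x₂ + a₇x₁x₂ + a₈x₂² + x₀³ + x₁³ + x₀x₁x₂ with a₈ ≠ 0. Then for every t ∈ ℂ, the projective closure of the fiber {f = t} in ℙ³ is smooth at every point of the hyperplane at infinity {x₃ = 0}. -/
open MvPolynomial

/-- Homogenization of `f = a₀x₀ + a₁x₁ + a₂x₂ + a₅x₀x₂ + a₇x₁x₂ + a₈x₂² + x₀³ + x₁³ + x₀x₁x₂`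
(nodal cubic top part). -/
noncomputable def Fnodal (a0 a1 a2 a5 a7 a8 : ℂ) : MvPolynomial (Fin 4) ℂ :=
  C a0 * X 0 * X 3 ^ 2 + C a1 * X 1 * X 3 ^ 2 + C a2 * X 2 * X 3 ^ 2 +
    X 3 * (C a5 * X 0 * X 2 + C a7 * X 1 * X 2 + C a8 * X 2 ^ 2) +
    X 0 ^ 3 + X 1 ^ 3 + X 0 * X 1 * X 2

/-- If `a₈ ≠ 0`, the projective closure of every fiber `{f = t}` is smooth at every
point of the hyperplane at infinity `{x₃ = 0}`: the gradient of `F - t x₃³` does not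
vanish at any point of the surface lying at infinity. -/
theorem nodal_smooth_at_infinity (a0 a1 a2 a5 a7 a8 : ℂ) (h8 : a8 ≠ 0) :
    ∀ t : ℂ, ∀ p : Fin 4 → ℂ, p ≠ 0 → p 3 = 0 →
      eval p (Fnodal a0 a1 a2 a5 a7 a8 - C t * X 3 ^ 3) = 0 →
      ∃ i : Fin 4, eval p (pderiv i (Fnodal a0 a1 a2 a5 a7 a8 - C t * X 3 ^ 3)) ≠ 0 := by
  intro t p hp h3 heval
  by_contra h
  push_neg at h
  have h0 := h 0
  have h1 := h 1
  have h2 := h 2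
  have h3' := h 3
  simp only [Fnodal, map_sub, map_add, map_mul, map_pow, eval_C, eval_X,
    pderiv_mul, pderiv_pow, pderiv_X, pderiv_C, Pi.single_apply] at h0 h1 h2 h3' heval
  norm_num [h3, Fin.ext_iff, show ((3:Fin 4):ℕ)=3 from rfl] at h0 h1 h2 h3' heval
  have h01 : p 0 = 0 ∧ p 1 = 0 := by
    rcases h2 with hz | hz
    · refine ⟨hz, ?_⟩
      have h1' : p 1 ^ 2 = 0 := by linear_combination (h1 - p 2 * hz) / 3
      exact pow_eq_zero_iff two_ne_zero |>.1 h1'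
    · refine ⟨?_, hz⟩
      have h0' : p 0 ^ 2 = 0 := by linear_combination (h0 - p 2 * hz) / 3
      exact pow_eq_zero_iff two_ne_zero |>.1 h0'
  obtain ⟨hz0, hz1⟩ := h01
  have hp2 : p 2 ≠ 0 := by
    intro hz2
    apply hp
    funext i
    fin_cases i <;> simp [hz0, hz1, hz2, h3]
  have : a8 * p 2 ^ 2 = 0 := by linear_combination h3' - a5 * p 2 * hz0 - a7 * p 2 * hz1
  rcases mul_eq_zero.1 this with h' | h'
  · exact h8 h'
  · exact hp2 (pow_eq_zero_iff two_ne_zero |>.1 h')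
end

section
/- Let g(x₁,x₂,x₃) = x₁² - (a₁²/4)x₃⁴ + x₃·q(x₂,x₃) where q(x₂,x₃) = a₂x₂x₃ + a₈x₂² - t x₃², with a₈ ≠ 0 and a₁ ≠ 0. If -4a₈t - a₂² ≠ 0 then g has Milnor number 4 at the origin (type D₄), and if -4a₈t - a₂² = 0 then g has Milnor number 5 at the origin (type D₅). -/
open MvPolynomial

/-- `g = x₁² - (a₁²/4)x₃⁴ + x₃·(a₂x₂x₃ + a₈x₂² - t x₃²)` in the variables
`(x₁, x₂, x₃)` with indices `(0, 1, 2)`. -/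
noncomputable def gDL (a1 a2 a8 t : ℂ) : MvPolynomial (Fin 3) ℂ :=
  X 0 ^ 2 - C (a1 ^ 2 / 4) * X 2 ^ 4 +
    X 2 * (C a2 * X 1 * X 2 + C a8 * X 1 ^ 2 - C t * X 2 ^ 2)

/-- The local Milnor number at the origin: dimension of
`ℂ[[x₁,x₂,x₃]] / (∂g/∂x₁, ∂g/∂x₂, ∂g/∂x₃)`. -/
noncomputable def milnorAtOrigin (g : MvPolynomial (Fin 3) ℂ) : ℕ :=
  Module.finrank ℂ
    (MvPowerSeries (Fin 3) ℂ ⧸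
      Ideal.span (Set.range fun i : Fin 3 =>
        ((pderiv i g : MvPolynomial (Fin 3) ℂ) : MvPowerSeries (Fin 3) ℂ)))

set_option maxHeartbeats 1000000

namespace GDLProof

noncomputable abbrev R3 : Type := MvPowerSeries (Fin 3) ℂ
noncomputable def CC : ℂ →+* R3 := MvPowerSeries.C
noncomputable def xx : R3 := MvPowerSeries.X 0
noncomputable def yy : R3 := MvPowerSeries.X 1
noncomputable def zz : R3 := MvPowerSeries.X 2

section Infra

open MvPowerSeries Finsupp

/-- exponent `(a,b,c)` -/
noncomputable def e3 (a b c : ℕ) : Fin 3 →₀ ℕ := single 0 a + single 1 b + single 2 c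

@[simp] lemma e3_apply0 (a b c : ℕ) : e3 a b c 0 = a := by simp [e3, single_apply]
@[simp] lemma e3_apply1 (a b c : ℕ) : e3 a b c 1 = b := by simp [e3, single_apply]
@[simp] lemma e3_apply2 (a b c : ℕ) : e3 a b c 2 = c := by simp [e3, single_apply]

lemma eq_e3 (d : Fin 3 →₀ ℕ) : d = e3 (d 0) (d 1) (d 2) := by
  ext i; fin_cases i <;> simp

lemma e3_inj {a b c a' b' c' : ℕ} (h : e3 a b c = e3 a' b' c') :
    a = a' ∧ b = b' ∧ c = c' := by
  refine ⟨?_, ?_, ?_⟩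
  · have := congrArg (fun f : Fin 3 →₀ ℕ => f 0) h; simpa using this
  · have := congrArg (fun f : Fin 3 →₀ ℕ => f 1) h; simpa using this
  · have := congrArg (fun f : Fin 3 →₀ ℕ => f 2) h; simpa using this

lemma e3_eq_iff {a b c a' b' c' : ℕ} :
    e3 a b c = e3 a' b' c' ↔ (a = a' ∧ b = b' ∧ c = c') := by
  constructor
  · exact e3_inj
  · rintro ⟨rfl, rfl, rfl⟩; rfl

lemma e3_le_iff {a b c : ℕ} {d : Fin 3 →₀ ℕ} :
    e3 a b c ≤ d ↔ (a ≤ d 0 ∧ b ≤ d 1 ∧ c ≤ d 2) := by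
  rw [Finsupp.le_def]
  constructor
  · intro h; exact ⟨by simpa using h 0, by simpa using h 1, by simpa using h 2⟩
  · rintro ⟨h0, h1, h2⟩ i; fin_cases i <;> simpa

lemma sub_e3 (d : Fin 3 →₀ ℕ) (a b c : ℕ) :
    d - e3 a b c = e3 (d 0 - a) (d 1 - b) (d 2 - c) := by
  ext i
  rw [Finsupp.tsub_apply]
  fin_cases i <;> simp

/-- ring form of monomials -/
lemma monomial_e3 (a b c : ℕ) (r : ℂ) :
    (MvPowerSeries.monomial (e3 a b c) r : R3) = CC r * xx ^ a * yy ^ b * zz ^ c := by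
  rw [xx, yy, zz, X_pow_eq, X_pow_eq, X_pow_eq, CC]
  rw [show (MvPowerSeries.C : ℂ →+* R3) r = (MvPowerSeries.monomial 0 r : R3) from rfl]
  rw [monomial_mul_monomial, monomial_mul_monomial, monomial_mul_monomial]
  simp [e3, add_assoc]

lemma coeff_e3_monomial (α β γ a b c : ℕ) (r : ℂ) :
    MvPowerSeries.coeff (e3 α β γ) (MvPowerSeries.monomial (e3 a b c) r : R3) =
      if a = α ∧ b = β ∧ c = γ then r else 0 := by
  rw [MvPowerSeries.coeff_monomial]
  by_cases h : a = α ∧ b = β ∧ c = γ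
  · rw [if_pos (e3_eq_iff.2 h).symm, if_pos h]
  · rw [if_neg (fun hh => h (e3_eq_iff.1 hh.symm)), if_neg h]

lemma coeff_e3_mul_monomial (w : R3) (α β γ a b c : ℕ) (r : ℂ) :
    MvPowerSeries.coeff (e3 α β γ) (w * MvPowerSeries.monomial (e3 a b c) r) =
      if a ≤ α ∧ b ≤ β ∧ c ≤ γ then
        MvPowerSeries.coeff (e3 (α-a) (β-b) (γ-c)) w * r else 0 := by
  rw [MvPowerSeries.coeff_mul_monomial]
  by_cases h : a ≤ α ∧ b ≤ β ∧ c ≤ γ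
  · rw [if_pos, if_pos h, sub_e3]; · simp
    · rw [e3_le_iff]; simpa using h
  · rw [if_neg, if_neg h]
    rw [e3_le_iff]; simpa using h

lemma mem_of_low_coeff_zero (I : Ideal R3) (n : ℕ) (f : R3)
    (hI : ∀ a b c : ℕ, a + b + c = n → (MvPowerSeries.monomial (e3 a b c) 1 : R3) ∈ I)
    (hf : ∀ d : Fin 3 →₀ ℕ, d 0 + d 1 + d 2 < n → MvPowerSeries.coeff d f = 0) :
    f ∈ I := by
  classical
  set E : Finset (ℕ × ℕ) := (Finset.range (n+1) ×ˢ Finset.range (n+1)).filter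
    (fun p => p.1 + p.2 ≤ n) with hE
  have hmemE : ∀ p : ℕ × ℕ, p ∈ E ↔ (p.1 ≤ n ∧ p.2 ≤ n ∧ p.1 + p.2 ≤ n) := by
    intro p
    simp only [hE, Finset.mem_filter, Finset.mem_product, Finset.mem_range]
    omega
  set ep : ℕ × ℕ → (Fin 3 →₀ ℕ) := fun p => e3 p.1 p.2 (n - p.1 - p.2) with hep
  set sc : (Fin 3 →₀ ℕ) → ℕ × ℕ :=
    fun d => (min (d 0) n, min (d 1) (n - min (d 0) n)) with hsc
  set g : (ℕ × ℕ) → R3 :=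
    fun p d => if sc (d + ep p) = p then MvPowerSeries.coeff (d + ep p) f else 0 with hgdef
  have hcg : ∀ p d, MvPowerSeries.coeff d (g p) =
      if sc (d + ep p) = p then MvPowerSeries.coeff (d + ep p) f else 0 := fun p d => rfl
  have key : f = ∑ p ∈ E, MvPowerSeries.monomial (ep p) 1 * g p := by
    apply MvPowerSeries.ext; intro d
    rw [map_sum]
    by_cases hd : d 0 + d 1 + d 2 < n
    · rw [hf d hd]
      symm; apply Finset.sum_eq_zero
      intro p hp
      rw [MvPowerSeries.coeff_monomial_mul, if_neg]
      intro hle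
      rw [hep] at hle
      rw [e3_le_iff] at hle
      have := (hmemE p).1 hp
      omega
    · push_neg at hd
      have hp0 : sc d ∈ E := by
        rw [hmemE]; simp only [hsc]; omega
      rw [Finset.sum_eq_single_of_mem (sc d) hp0]
      · have hle : ep (sc d) ≤ d := by
          rw [hep, e3_le_iff]
          simp only [hsc]
          omega
        rw [MvPowerSeries.coeff_monomial_mul, if_pos hle, one_mul, hcg,
          tsub_add_cancel_of_le hle, if_pos rfl]
      · intro p hp hne
        rw [MvPowerSeries.coeff_monomial_mul]
        by_cases hle : ep p ≤ d
        · rw [if_pos hle, hcg, tsub_add_cancel_of_le hle,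
            if_neg (fun h => hne h.symm), mul_zero]
        · rw [if_neg hle]
  rw [key]
  refine Ideal.sum_mem _ (fun p hp => Ideal.mul_mem_right _ _ ?_)
  have := (hmemE p).1 hp
  exact hI p.1 p.2 (n - p.1 - p.2) (by omega)

/-! monomial forms of the generators -/

lemma u_mono (c2 : ℂ) : yy * zz + CC c2 * zz ^ 2
    = MvPowerSeries.monomial (e3 0 1 1) 1 + MvPowerSeries.monomial (e3 0 0 2) c2 := by
  rw [monomial_e3, monomial_e3]; simp [map_one]

lemma B1_mono (c : ℂ) : yy ^ 2 - CC c * zz ^ 2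
    = MvPowerSeries.monomial (e3 0 2 0) 1 - MvPowerSeries.monomial (e3 0 0 2) c := by
  rw [monomial_e3, monomial_e3]; simp [map_one]

lemma B2_mono (c c3 : ℂ) : yy ^ 2 - CC c * zz ^ 2 - CC c3 * zz ^ 3
    = MvPowerSeries.monomial (e3 0 2 0) 1 - MvPowerSeries.monomial (e3 0 0 2) c - MvPowerSeries.monomial (e3 0 0 3) c3 := by
  rw [monomial_e3, monomial_e3, monomial_e3]; simp [map_one]

lemma x_mono : xx = MvPowerSeries.monomial (e3 1 0 0) 1 := by rw [monomial_e3]; simp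

lemma z3_mono : zz ^ 3 = MvPowerSeries.monomial (e3 0 0 3) 1 := by rw [monomial_e3]; simp

lemma z4_mono : zz ^ 4 = MvPowerSeries.monomial (e3 0 0 4) 1 := by rw [monomial_e3]; simp

/-! the coefficient functionals -/

noncomputable def L (a b c : ℕ) : R3 →ₗ[ℂ] ℂ := MvPowerSeries.coeff (e3 a b c)

noncomputable def phi1 (c2 c : ℂ) : R3 →ₗ[ℂ] (Fin 4 → ℂ) :=
  LinearMap.pi ![L 0 0 0, L 0 1 0, L 0 0 1, L 0 0 2 + c • L 0 2 0 - c2 • L 0 1 1]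

noncomputable def phi2 (c2 c c3 : ℂ) : R3 →ₗ[ℂ] (Fin 5 → ℂ) :=
  LinearMap.pi ![L 0 0 0, L 0 1 0, L 0 0 1, L 0 0 2 + c • L 0 2 0 - c2 • L 0 1 1,
    L 0 0 3 + c • L 0 2 1 + c3 • L 0 2 0 - c2 • L 0 1 2 - (c * c2) • L 0 3 0]

/-! ### Case D ≠ 0 : dimension 4 -/

lemma dim_case1 (c2 c : ℂ) :
    Module.finrank ℂ
      (R3 ⧸ Ideal.span {xx, yy * zz + CC c2 * zz ^ 2, yy ^ 2 - CC c * zz ^ 2, zz ^ 3}) = 4 := by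
  classical
  set u : R3 := yy * zz + CC c2 * zz ^ 2 with hu
  set B : R3 := yy ^ 2 - CC c * zz ^ 2 with hB
  set I : Ideal R3 := Ideal.span {xx, u, B, zz ^ 3} with hI
  have hxI : xx ∈ I := Ideal.subset_span (by simp)
  have huI : u ∈ I := Ideal.subset_span (by simp)
  have hBI : B ∈ I := Ideal.subset_span (by simp)
  have hz3I : zz ^ 3 ∈ I := Ideal.subset_span (by simp)
  -- degree-3 monomials are in I
  have mono3 : ∀ a b g : ℕ, a + b + g = 3 → (MvPowerSeries.monomial (e3 a b g) 1 : R3) ∈ I := by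
    intro a b g hs
    rw [monomial_e3, map_one, one_mul]
    match a with
    | a' + 1 =>
        rw [show xx ^ (a' + 1) * yy ^ b * zz ^ g = (xx ^ a' * yy ^ b * zz ^ g) * xx by ring]
        exact Ideal.mul_mem_left _ _ hxI
    | 0 =>
        rw [pow_zero, one_mul]
        have hb : b ≤ 3 := by omega
        interval_cases b
        · have hg : g = 3 := by omega
          subst hg; simpa using hz3I
        · have hg : g = 2 := by omega
          subst hg
          rw [show yy ^ 1 * zz ^ 2 = u * zz - CC c2 * zz ^ 3 by rw [hu]; ring]
          exact sub_mem (Ideal.mul_mem_right _ _ huI) (Ideal.mul_mem_left _ _ hz3I)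
        · have hg : g = 1 := by omega
          subst hg
          rw [show yy ^ 2 * zz ^ 1 = B * zz + CC c * zz ^ 3 by rw [hB]; ring]
          exact add_mem (Ideal.mul_mem_right _ _ hBI) (Ideal.mul_mem_left _ _ hz3I)
        · have hg : g = 0 := by omega
          subst hg
          rw [show yy ^ 3 * zz ^ 0 = B * yy + CC c * zz * u - CC c * CC c2 * zz ^ 3 by
            rw [hB, hu]; ring]
          exact sub_mem (add_mem (Ideal.mul_mem_right _ _ hBI)
            (Ideal.mul_mem_left _ _ huI))
            (Ideal.mul_mem_left _ _ hz3I)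
  -- the ideal is contained in the kernel of phi1
  have hker1 : ∀ f ∈ I, phi1 c2 c f = 0 := by
    have hgen : ∀ w : R3, ∀ s ∈ ({xx, u, B, zz ^ 3} : Set R3), phi1 c2 c (w * s) = 0 := by
      intro w s hs
      simp only [Set.mem_insert_iff, Set.mem_singleton_iff] at hs
      rcases hs with rfl | rfl | rfl | rfl
      · rw [x_mono]
        funext i
        fin_cases i <;>
          simp [phi1, LinearMap.pi_apply, L, coeff_e3_mul_monomial]
      · rw [hu, u_mono c2]
        funext i
        fin_cases i <;>
          simp [phi1, LinearMap.pi_apply, L, mul_add, coeff_e3_mul_monomial] <;> ring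
      · rw [hB, B1_mono c]
        funext i
        fin_cases i <;>
          simp [phi1, LinearMap.pi_apply, L, mul_sub, coeff_e3_mul_monomial] <;> ring
      · rw [z3_mono]
        funext i
        fin_cases i <;>
          simp [phi1, LinearMap.pi_apply, L, coeff_e3_mul_monomial]
    intro f hf
    have : ∀ w : R3, phi1 c2 c (w * f) = 0 := by
      refine Submodule.span_induction ?_ ?_ ?_ ?_ hf
      · intro s hs w; exact hgen w s hs
      · intro w; rw [mul_zero, map_zero]
      · intro f1 f2 _ _ h1 h2 w
        rw [mul_add, map_add, h1 w, h2 w, add_zero]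
      · intro r f1 _ h1 w
        rw [smul_eq_mul, show w * (r * f1) = (w * r) * f1 by ring]
        exact h1 (w * r)
    simpa using this 1
  -- the kernel of phi1 is contained in the ideal
  have hker2 : ∀ f : R3, phi1 c2 c f = 0 → f ∈ I := by
    intro f hf
    set S : R3 :=
      MvPowerSeries.monomial (e3 0 0 0) (MvPowerSeries.coeff (e3 0 0 0) f)
      + MvPowerSeries.monomial (e3 1 0 0) (MvPowerSeries.coeff (e3 1 0 0) f)
      + MvPowerSeries.monomial (e3 0 1 0) (MvPowerSeries.coeff (e3 0 1 0) f)
      + MvPowerSeries.monomial (e3 0 0 1) (MvPowerSeries.coeff (e3 0 0 1) f)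
      + MvPowerSeries.monomial (e3 2 0 0) (MvPowerSeries.coeff (e3 2 0 0) f)
      + MvPowerSeries.monomial (e3 1 1 0) (MvPowerSeries.coeff (e3 1 1 0) f)
      + MvPowerSeries.monomial (e3 1 0 1) (MvPowerSeries.coeff (e3 1 0 1) f)
      + MvPowerSeries.monomial (e3 0 2 0) (MvPowerSeries.coeff (e3 0 2 0) f)
      + MvPowerSeries.monomial (e3 0 1 1) (MvPowerSeries.coeff (e3 0 1 1) f)
      + MvPowerSeries.monomial (e3 0 0 2) (MvPowerSeries.coeff (e3 0 0 2) f) with hS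
    have hrest : f - S ∈ I := by
      apply mem_of_low_coeff_zero I 3 _ mono3
      intro d hd
      obtain ⟨a, b, g, hab, rfl⟩ : ∃ a b g, a + b + g < 3 ∧ d = e3 a b g :=
        ⟨d 0, d 1, d 2, hd, eq_e3 d⟩
      have ha : a ≤ 2 := by omega
      have hb : b ≤ 2 := by omega
      have hg : g ≤ 2 := by omega
      interval_cases a <;> interval_cases b <;> interval_cases g <;>
        first
          | omega
          | (simp [hS, map_sub, map_add, coeff_e3_monomial])
    -- the truncation is in I thanks to the relations
    have h0 : MvPowerSeries.coeff (e3 0 0 0) f = 0 := by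
      have := congrFun hf 0
      simpa [phi1, LinearMap.pi_apply, L] using this
    have h1 : MvPowerSeries.coeff (e3 0 1 0) f = 0 := by
      have := congrFun hf 1
      simpa [phi1, LinearMap.pi_apply, L] using this
    have h2 : MvPowerSeries.coeff (e3 0 0 1) f = 0 := by
      have := congrFun hf 2
      simpa [phi1, LinearMap.pi_apply, L] using this
    have h3' : MvPowerSeries.coeff (e3 0 0 2) f
        = c2 * MvPowerSeries.coeff (e3 0 1 1) f
          - c * MvPowerSeries.coeff (e3 0 2 0) f := by
      have := congrFun hf 3
      simp [phi1, LinearMap.pi_apply, L] at this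
      linear_combination this
    have hSI : S ∈ I := by
      have hCC3 : CC (MvPowerSeries.coeff (e3 0 0 2) f)
          = CC c2 * CC (MvPowerSeries.coeff (e3 0 1 1) f)
            - CC c * CC (MvPowerSeries.coeff (e3 0 2 0) f) := by
        rw [← map_mul, ← map_mul, ← map_sub]
        exact congrArg CC h3'
      have hSform : S = (CC (MvPowerSeries.coeff (e3 1 0 0) f)
            + CC (MvPowerSeries.coeff (e3 2 0 0) f) * xx
            + CC (MvPowerSeries.coeff (e3 1 1 0) f) * yy
            + CC (MvPowerSeries.coeff (e3 1 0 1) f) * zz) * xx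
          + CC (MvPowerSeries.coeff (e3 0 2 0) f) * B
          + CC (MvPowerSeries.coeff (e3 0 1 1) f) * u := by
        rw [hS, h0, h1, h2]
        simp only [monomial_e3, map_zero, hu, hB]
        linear_combination (zz ^ 2) * hCC3
      rw [hSform]
      exact add_mem (add_mem (Ideal.mul_mem_left _ _ hxI) (Ideal.mul_mem_left _ _ hBI))
        (Ideal.mul_mem_left _ _ huI)
    have : f = (f - S) + S := by ring
    rw [this]
    exact add_mem hrest hSI
  -- surjectivity of phi1
  have hsurj : Function.Surjective (phi1 c2 c) := by
    intro v
    refine ⟨CC (v 0) + CC (v 1) * yy + CC (v 2) * zz + CC (v 3) * zz ^ 2, ?_⟩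
    have hform : CC (v 0) + CC (v 1) * yy + CC (v 2) * zz + CC (v 3) * zz ^ 2
        = MvPowerSeries.monomial (e3 0 0 0) (v 0) + MvPowerSeries.monomial (e3 0 1 0) (v 1)
          + MvPowerSeries.monomial (e3 0 0 1) (v 2) + MvPowerSeries.monomial (e3 0 0 2) (v 3) := by
      simp [monomial_e3]
    rw [hform]
    funext i
    fin_cases i <;>
      simp [phi1, LinearMap.pi_apply, L, coeff_e3_monomial]
  -- conclude
  have hker : LinearMap.ker (phi1 c2 c) = Submodule.restrictScalars ℂ I := by
    ext f
    simp only [LinearMap.mem_ker, Submodule.restrictScalars_mem]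
    exact ⟨fun h => hker2 f h, fun h => hker1 f h⟩
  calc Module.finrank ℂ (R3 ⧸ I)
      = Module.finrank ℂ (R3 ⧸ Submodule.restrictScalars ℂ I) :=
        (LinearEquiv.finrank_eq (Submodule.Quotient.restrictScalarsEquiv ℂ I)).symm
    _ = Module.finrank ℂ (Fin 4 → ℂ) :=
        LinearEquiv.finrank_eq ((Submodule.quotEquivOfEq _ _ hker.symm).trans
          ((phi1 c2 c).quotKerEquivOfSurjective hsurj))
    _ = 4 := Module.finrank_fin_fun ℂ

/-! ### Case D = 0 : dimension 5 -/

lemma dim_case2 (c2 c c3 : ℂ) (hcc : c = c2 ^ 2) :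
    Module.finrank ℂ
      (R3 ⧸ Ideal.span {xx, yy * zz + CC c2 * zz ^ 2,
          yy ^ 2 - CC c * zz ^ 2 - CC c3 * zz ^ 3, zz ^ 4}) = 5 := by
  classical
  set u : R3 := yy * zz + CC c2 * zz ^ 2 with hu
  set B : R3 := yy ^ 2 - CC c * zz ^ 2 - CC c3 * zz ^ 3 with hB
  set I : Ideal R3 := Ideal.span {xx, u, B, zz ^ 4} with hI
  have hxI : xx ∈ I := Ideal.subset_span (by simp)
  have huI : u ∈ I := Ideal.subset_span (by simp)
  have hBI : B ∈ I := Ideal.subset_span (by simp)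
  have hz4I : zz ^ 4 ∈ I := Ideal.subset_span (by simp)
  have hyz3I : yy * zz ^ 3 ∈ I := by
    rw [show yy * zz ^ 3 = u * zz ^ 2 - CC c2 * zz ^ 4 by rw [hu]; ring]
    exact sub_mem (Ideal.mul_mem_right _ _ huI) (Ideal.mul_mem_left _ _ hz4I)
  have hy2z2I : yy ^ 2 * zz ^ 2 ∈ I := by
    rw [show yy ^ 2 * zz ^ 2 = B * zz ^ 2 + (CC c + CC c3 * zz) * zz ^ 4 by rw [hB]; ring]
    exact add_mem (Ideal.mul_mem_right _ _ hBI) (Ideal.mul_mem_left _ _ hz4I)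
  -- degree-4 monomials are in I
  have mono4 : ∀ a b g : ℕ, a + b + g = 4 → (MvPowerSeries.monomial (e3 a b g) 1 : R3) ∈ I := by
    intro a b g hs
    rw [monomial_e3, map_one, one_mul]
    match a with
    | a' + 1 =>
        rw [show xx ^ (a' + 1) * yy ^ b * zz ^ g = (xx ^ a' * yy ^ b * zz ^ g) * xx by ring]
        exact Ideal.mul_mem_left _ _ hxI
    | 0 =>
        rw [pow_zero, one_mul]
        have hb : b ≤ 4 := by omega
        interval_cases b
        · have hg : g = 4 := by omega
          subst hg; simpa using hz4I
        · have hg : g = 3 := by omega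
          subst hg
          rw [show yy ^ 1 * zz ^ 3 = yy * zz ^ 3 by ring]
          exact hyz3I
        · have hg : g = 2 := by omega
          subst hg
          exact hy2z2I
        · have hg : g = 1 := by omega
          subst hg
          rw [show yy ^ 3 * zz ^ 1 = B * (yy * zz) + CC c * (yy * zz ^ 3)
              + CC c3 * (zz * (yy * zz ^ 3)) by rw [hB]; ring]
          exact add_mem (add_mem (Ideal.mul_mem_right _ _ hBI)
            (Ideal.mul_mem_left _ _ hyz3I))
            (Ideal.mul_mem_left _ _ (Ideal.mul_mem_left _ _ hyz3I))
        · have hg : g = 0 := by omega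
          subst hg
          rw [show yy ^ 4 * zz ^ 0 = B * yy ^ 2 + CC c * (yy ^ 2 * zz ^ 2)
              + CC c3 * (zz * (yy ^ 2 * zz ^ 2)) by rw [hB]; ring]
          exact add_mem (add_mem (Ideal.mul_mem_right _ _ hBI)
            (Ideal.mul_mem_left _ _ hy2z2I))
            (Ideal.mul_mem_left _ _ (Ideal.mul_mem_left _ _ hy2z2I))
  -- the ideal is contained in the kernel of phi2
  have hker1 : ∀ f ∈ I, phi2 c2 c c3 f = 0 := by
    have hgen : ∀ w : R3, ∀ s ∈ ({xx, u, B, zz ^ 4} : Set R3), phi2 c2 c c3 (w * s) = 0 := by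
      intro w s hs
      simp only [Set.mem_insert_iff, Set.mem_singleton_iff] at hs
      rcases hs with rfl | rfl | rfl | rfl
      · rw [x_mono]
        funext i
        fin_cases i <;>
          simp [phi2, LinearMap.pi_apply, L, coeff_e3_mul_monomial]
      · rw [hu, u_mono c2]
        funext i
        fin_cases i <;>
          [skip; skip; skip; skip;
            (simp [phi2, LinearMap.pi_apply, L, mul_add, coeff_e3_mul_monomial]
             linear_combination (MvPowerSeries.coeff (e3 0 1 0) w) * hcc)] <;>
          (simp [phi2, LinearMap.pi_apply, L, mul_add, coeff_e3_mul_monomial]; try ring)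
      · rw [hB, B2_mono c c3]
        funext i
        fin_cases i <;>
          simp [phi2, LinearMap.pi_apply, L, mul_sub, coeff_e3_mul_monomial] <;> ring
      · rw [z4_mono]
        funext i
        fin_cases i <;>
          simp [phi2, LinearMap.pi_apply, L, coeff_e3_mul_monomial]
    intro f hf
    have : ∀ w : R3, phi2 c2 c c3 (w * f) = 0 := by
      refine Submodule.span_induction ?_ ?_ ?_ ?_ hf
      · intro s hs w; exact hgen w s hs
      · intro w; rw [mul_zero, map_zero]
      · intro f1 f2 _ _ h1 h2 w
        rw [mul_add, map_add, h1 w, h2 w, add_zero]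
      · intro r f1 _ h1 w
        rw [smul_eq_mul, show w * (r * f1) = (w * r) * f1 by ring]
        exact h1 (w * r)
    simpa using this 1
  -- the kernel of phi2 is contained in the ideal
  have hker2 : ∀ f : R3, phi2 c2 c c3 f = 0 → f ∈ I := by
    intro f hf
    set S : R3 :=
      MvPowerSeries.monomial (e3 0 0 0) (MvPowerSeries.coeff (e3 0 0 0) f)
      + MvPowerSeries.monomial (e3 1 0 0) (MvPowerSeries.coeff (e3 1 0 0) f)
      + MvPowerSeries.monomial (e3 0 1 0) (MvPowerSeries.coeff (e3 0 1 0) f)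
      + MvPowerSeries.monomial (e3 0 0 1) (MvPowerSeries.coeff (e3 0 0 1) f)
      + MvPowerSeries.monomial (e3 2 0 0) (MvPowerSeries.coeff (e3 2 0 0) f)
      + MvPowerSeries.monomial (e3 1 1 0) (MvPowerSeries.coeff (e3 1 1 0) f)
      + MvPowerSeries.monomial (e3 1 0 1) (MvPowerSeries.coeff (e3 1 0 1) f)
      + MvPowerSeries.monomial (e3 0 2 0) (MvPowerSeries.coeff (e3 0 2 0) f)
      + MvPowerSeries.monomial (e3 0 1 1) (MvPowerSeries.coeff (e3 0 1 1) f)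
      + MvPowerSeries.monomial (e3 0 0 2) (MvPowerSeries.coeff (e3 0 0 2) f)
      + MvPowerSeries.monomial (e3 3 0 0) (MvPowerSeries.coeff (e3 3 0 0) f)
      + MvPowerSeries.monomial (e3 2 1 0) (MvPowerSeries.coeff (e3 2 1 0) f)
      + MvPowerSeries.monomial (e3 2 0 1) (MvPowerSeries.coeff (e3 2 0 1) f)
      + MvPowerSeries.monomial (e3 1 2 0) (MvPowerSeries.coeff (e3 1 2 0) f)
      + MvPowerSeries.monomial (e3 1 1 1) (MvPowerSeries.coeff (e3 1 1 1) f)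
      + MvPowerSeries.monomial (e3 1 0 2) (MvPowerSeries.coeff (e3 1 0 2) f)
      + MvPowerSeries.monomial (e3 0 3 0) (MvPowerSeries.coeff (e3 0 3 0) f)
      + MvPowerSeries.monomial (e3 0 2 1) (MvPowerSeries.coeff (e3 0 2 1) f)
      + MvPowerSeries.monomial (e3 0 1 2) (MvPowerSeries.coeff (e3 0 1 2) f)
      + MvPowerSeries.monomial (e3 0 0 3) (MvPowerSeries.coeff (e3 0 0 3) f) with hS
    have hrest : f - S ∈ I := by
      apply mem_of_low_coeff_zero I 4 _ mono4
      intro d hd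
      obtain ⟨a, b, g, hab, rfl⟩ : ∃ a b g, a + b + g < 4 ∧ d = e3 a b g :=
        ⟨d 0, d 1, d 2, hd, eq_e3 d⟩
      have ha : a ≤ 3 := by omega
      have hb : b ≤ 3 := by omega
      have hg : g ≤ 3 := by omega
      interval_cases a <;> interval_cases b <;> interval_cases g <;>
        first
          | omega
          | (simp [hS, map_sub, map_add, coeff_e3_monomial])
    have h0 : MvPowerSeries.coeff (e3 0 0 0) f = 0 := by
      have := congrFun hf 0
      simpa [phi2, LinearMap.pi_apply, L] using this
    have h1 : MvPowerSeries.coeff (e3 0 1 0) f = 0 := by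
      have := congrFun hf 1
      simpa [phi2, LinearMap.pi_apply, L] using this
    have h2 : MvPowerSeries.coeff (e3 0 0 1) f = 0 := by
      have := congrFun hf 2
      simpa [phi2, LinearMap.pi_apply, L] using this
    have h3' : MvPowerSeries.coeff (e3 0 0 2) f
        = c2 * MvPowerSeries.coeff (e3 0 1 1) f
          - c * MvPowerSeries.coeff (e3 0 2 0) f := by
      have := congrFun hf 3
      simp [phi2, LinearMap.pi_apply, L] at this
      linear_combination this
    have h4' : MvPowerSeries.coeff (e3 0 0 3) f
        = c2 * MvPowerSeries.coeff (e3 0 1 2) f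
          - c * MvPowerSeries.coeff (e3 0 2 1) f
          - c3 * MvPowerSeries.coeff (e3 0 2 0) f
          + c * c2 * MvPowerSeries.coeff (e3 0 3 0) f := by
      have := congrFun hf 4
      simp [phi2, LinearMap.pi_apply, L] at this
      linear_combination this
    have hSI : S ∈ I := by
      have hCC3 : CC (MvPowerSeries.coeff (e3 0 0 2) f)
          = CC c2 * CC (MvPowerSeries.coeff (e3 0 1 1) f)
            - CC c * CC (MvPowerSeries.coeff (e3 0 2 0) f) := by
        rw [← map_mul, ← map_mul, ← map_sub]
        exact congrArg CC h3'
      have hCC4 : CC (MvPowerSeries.coeff (e3 0 0 3) f)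
          = CC c2 * CC (MvPowerSeries.coeff (e3 0 1 2) f)
            - CC c * CC (MvPowerSeries.coeff (e3 0 2 1) f)
            - CC c3 * CC (MvPowerSeries.coeff (e3 0 2 0) f)
            + CC c * CC c2 * CC (MvPowerSeries.coeff (e3 0 3 0) f) := by
        rw [← map_mul, ← map_mul, ← map_mul, ← map_mul, ← map_mul, ← map_sub, ← map_sub,
          ← map_add]
        exact congrArg CC h4'
      have hSform : S = (CC (MvPowerSeries.coeff (e3 1 0 0) f)
            + CC (MvPowerSeries.coeff (e3 2 0 0) f) * xx
            + CC (MvPowerSeries.coeff (e3 3 0 0) f) * xx ^ 2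
            + CC (MvPowerSeries.coeff (e3 1 1 0) f) * yy
            + CC (MvPowerSeries.coeff (e3 1 0 1) f) * zz
            + CC (MvPowerSeries.coeff (e3 2 1 0) f) * xx * yy
            + CC (MvPowerSeries.coeff (e3 2 0 1) f) * xx * zz
            + CC (MvPowerSeries.coeff (e3 1 2 0) f) * yy ^ 2
            + CC (MvPowerSeries.coeff (e3 1 1 1) f) * yy * zz
            + CC (MvPowerSeries.coeff (e3 1 0 2) f) * zz ^ 2) * xx
          + (CC (MvPowerSeries.coeff (e3 0 2 0) f)
            + CC (MvPowerSeries.coeff (e3 0 3 0) f) * yy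
            + CC (MvPowerSeries.coeff (e3 0 2 1) f) * zz) * B
          + (CC (MvPowerSeries.coeff (e3 0 1 1) f)
            + CC (MvPowerSeries.coeff (e3 0 1 2) f) * zz
            + CC (MvPowerSeries.coeff (e3 0 3 0) f) * (CC c * zz + CC c3 * zz ^ 2)) * u
          + (CC (MvPowerSeries.coeff (e3 0 2 1) f) * CC c3
            - CC (MvPowerSeries.coeff (e3 0 3 0) f) * CC c3 * CC c2) * zz ^ 4 := by
        rw [hS, h0, h1, h2]
        simp only [monomial_e3, map_zero, hu, hB]
        linear_combination (zz ^ 2) * hCC3 + (zz ^ 3) * hCC4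
      rw [hSform]
      exact add_mem (add_mem (add_mem (Ideal.mul_mem_left _ _ hxI)
        (Ideal.mul_mem_left _ _ hBI)) (Ideal.mul_mem_left _ _ huI))
        (Ideal.mul_mem_left _ _ hz4I)
    have : f = (f - S) + S := by ring
    rw [this]
    exact add_mem hrest hSI
  -- surjectivity of phi2
  have hsurj : Function.Surjective (phi2 c2 c c3) := by
    intro v
    refine ⟨CC (v 0) + CC (v 1) * yy + CC (v 2) * zz + CC (v 3) * zz ^ 2
      + CC (v 4) * zz ^ 3, ?_⟩
    have hform : CC (v 0) + CC (v 1) * yy + CC (v 2) * zz + CC (v 3) * zz ^ 2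
          + CC (v 4) * zz ^ 3
        = MvPowerSeries.monomial (e3 0 0 0) (v 0) + MvPowerSeries.monomial (e3 0 1 0) (v 1)
          + MvPowerSeries.monomial (e3 0 0 1) (v 2) + MvPowerSeries.monomial (e3 0 0 2) (v 3)
          + MvPowerSeries.monomial (e3 0 0 3) (v 4) := by
      simp [monomial_e3]
    rw [hform]
    funext i
    fin_cases i <;>
      simp [phi2, LinearMap.pi_apply, L, coeff_e3_monomial]
  -- conclude
  have hker : LinearMap.ker (phi2 c2 c c3) = Submodule.restrictScalars ℂ I := by
    ext f
    simp only [LinearMap.mem_ker, Submodule.restrictScalars_mem]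
    exact ⟨fun h => hker2 f h, fun h => hker1 f h⟩
  calc Module.finrank ℂ (R3 ⧸ I)
      = Module.finrank ℂ (R3 ⧸ Submodule.restrictScalars ℂ I) :=
        (LinearEquiv.finrank_eq (Submodule.Quotient.restrictScalarsEquiv ℂ I)).symm
    _ = Module.finrank ℂ (Fin 5 → ℂ) :=
        LinearEquiv.finrank_eq ((Submodule.quotEquivOfEq _ _ hker.symm).trans
          ((phi2 c2 c c3).quotKerEquivOfSurjective hsurj))
    _ = 5 := Module.finrank_fin_fun ℂ

end Infra

section Polys

variable (a1 a2 a8 t : ℂ)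

lemma pd0 : pderiv 0 (gDL a1 a2 a8 t) = 2 * X 0 := by simp [gDL]

lemma pd1 : pderiv 1 (gDL a1 a2 a8 t) =
    C a2 * X 2 ^ 2 + 2 * C a8 * X 1 * X 2 := by
  simp [gDL]; ring

lemma pd2 : pderiv 2 (gDL a1 a2 a8 t) =
    C a8 * X 1 ^ 2 + 2 * C a2 * X 1 * X 2 - 3 * C t * X 2 ^ 2 - C a1 ^ 2 * X 2 ^ 3 := by
  have h4 : (C (a1 ^ 2 / 4) : MvPolynomial (Fin 3) ℂ) * 4 = C a1 ^ 2 := by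
    rw [← map_ofNat (C : ℂ →+* MvPolynomial (Fin 3) ℂ) 4, ← map_mul,
      show a1 ^ 2 / 4 * 4 = a1 ^ 2 by ring, map_pow]
  simp [gDL]
  linear_combination (- (X 2 : MvPolynomial (Fin 3) ℂ) ^ 3) * h4

lemma coe_two : ((2 : MvPolynomial (Fin 3) ℂ) : R3) = 2 := by
  rw [← map_ofNat (C : ℂ →+* MvPolynomial (Fin 3) ℂ) 2, MvPolynomial.coe_C]
  exact map_ofNat (MvPowerSeries.C (σ := Fin 3) (R := ℂ)) 2

lemma coe_three : ((3 : MvPolynomial (Fin 3) ℂ) : R3) = 3 := by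
  rw [← map_ofNat (C : ℂ →+* MvPolynomial (Fin 3) ℂ) 3, MvPolynomial.coe_C]
  exact map_ofNat (MvPowerSeries.C (σ := Fin 3) (R := ℂ)) 3

lemma G0cast : ((pderiv 0 (gDL a1 a2 a8 t) : MvPolynomial (Fin 3) ℂ) : R3) = 2 * xx := by
  rw [pd0, MvPolynomial.coe_mul, MvPolynomial.coe_X, coe_two, xx]

lemma G1cast : ((pderiv 1 (gDL a1 a2 a8 t) : MvPolynomial (Fin 3) ℂ) : R3) =
    CC a2 * zz ^ 2 + 2 * CC a8 * yy * zz := by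
  rw [pd1]
  push_cast [MvPolynomial.coe_add, MvPolynomial.coe_mul, MvPolynomial.coe_pow,
    MvPolynomial.coe_X, MvPolynomial.coe_C, coe_two]
  simp [CC, yy, zz]

lemma G2cast : ((pderiv 2 (gDL a1 a2 a8 t) : MvPolynomial (Fin 3) ℂ) : R3) =
    CC a8 * yy ^ 2 + 2 * CC a2 * yy * zz - 3 * CC t * zz ^ 2 - CC a1 ^ 2 * zz ^ 3 := by
  have pd2' : pderiv 2 (gDL a1 a2 a8 t) =
      C a8 * X 1 ^ 2 + 2 * C a2 * X 1 * X 2 + C (-(3*t)) * X 2 ^ 2 + C (-(a1^2)) * X 2 ^ 3 := by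
    rw [pd2, show (C (-(3*t)) : MvPolynomial (Fin 3) ℂ) = -(3 * C t) by
        rw [map_neg, map_mul, map_ofNat],
      show (C (-(a1^2)) : MvPolynomial (Fin 3) ℂ) = -(C a1 ^ 2) by rw [map_neg, map_pow]]
    ring
  rw [pd2']
  push_cast [MvPolynomial.coe_add, MvPolynomial.coe_mul,
    MvPolynomial.coe_pow, MvPolynomial.coe_X, MvPolynomial.coe_C, coe_two, coe_three]
  simp only [CC, xx, yy, zz, map_neg, map_mul, map_pow, map_ofNat]
  ring

end Polys

section Spans

open MvPowerSeries

variable (a1 a2 a8 t : ℂ)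

/-- map a scalar identity through `CC` -/
lemma CCmap {s s' : ℂ} (h : s = s') : CC s = CC s' := congrArg CC h

lemma htwo : (2 : R3) = CC 2 := (map_ofNat CC 2).symm
lemma hthree : (3 : R3) = CC 3 := (map_ofNat CC 3).symm
lemma hone : (1 : R3) = CC 1 := (map_one CC).symm

lemma span_case1 (h8 : a8 ≠ 0) (hD : -4 * a8 * t - a2 ^ 2 ≠ 0) :
    Ideal.span (Set.range fun i : Fin 3 =>
        ((pderiv i (gDL a1 a2 a8 t) : MvPolynomial (Fin 3) ℂ) : MvPowerSeries (Fin 3) ℂ))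
      = Ideal.span {xx, yy * zz + CC (a2 / (2 * a8)) * zz ^ 2,
          yy ^ 2 - CC ((a2 ^ 2 + 3 * t * a8) / a8 ^ 2) * zz ^ 2, zz ^ 3} := by
  classical
  set c2 : ℂ := a2 / (2 * a8) with hc2def
  set c : ℂ := (a2 ^ 2 + 3 * t * a8) / a8 ^ 2 with hcdef
  set k : ℂ := 3 * (-4 * a8 * t - a2 ^ 2) / (4 * a8) with hkdef
  have hk : k ≠ 0 := by
    rw [hkdef]
    exact div_ne_zero (mul_ne_zero (by norm_num) hD) (mul_ne_zero (by norm_num) h8)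
  -- scalar identities
  have i1 : a2 = 2 * a8 * c2 := by rw [hc2def]; field_simp
  have i2 : 2 * a2 * c2 - a8 * c = -(3 * t) := by
    rw [hc2def, hcdef]; field_simp; ring
  have i3 : a8 * c2 ^ 2 - 2 * a2 * c2 - 3 * t = k := by
    rw [hc2def, hkdef]; field_simp; ring
  have i4 : (1 : ℂ) / 2 * 2 = 1 := by norm_num
  have i5 : (1 : ℂ) / (2 * a8) * (2 * a8) = 1 := by field_simp
  have i6 : (1 : ℂ) / (2 * a8) * a2 = c2 := by rw [hc2def]; field_simp
  have i7 : (1 : ℂ) / a8 * a8 = 1 := by field_simp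
  -- CC versions
  have C1 : CC a2 = 2 * CC a8 * CC c2 := by
    simp only [htwo, ← map_mul]; exact CCmap i1
  have C2 : 2 * CC a2 * CC c2 - CC a8 * CC c = -(3 * CC t) := by
    simp only [htwo, hthree, ← map_mul, ← map_sub, ← map_neg]; exact CCmap i2
  have C3 : CC a8 * CC c2 ^ 2 - 2 * CC a2 * CC c2 - 3 * CC t = CC k := by
    simp only [htwo, hthree, ← map_pow, ← map_mul, ← map_sub]; exact CCmap i3
  have C4 : CC (1/2) * 2 = 1 := by
    simp only [htwo, hone, ← map_mul]; exact CCmap i4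
  have C5 : CC (1/(2*a8)) * (2 * CC a8) = 1 := by
    simp only [htwo, hone, ← map_mul]; exact CCmap i5
  have C6 : CC (1/(2*a8)) * CC a2 = CC c2 := by
    simp only [← map_mul]; exact CCmap i6
  have C7 : CC (1/a8) * CC a8 = 1 := by
    simp only [hone, ← map_mul]; exact CCmap i7
  set u : R3 := yy * zz + CC c2 * zz ^ 2 with hu
  set B : R3 := yy ^ 2 - CC c * zz ^ 2 with hB
  set J : Ideal R3 := Ideal.span (Set.range fun i : Fin 3 =>
      ((pderiv i (gDL a1 a2 a8 t) : MvPolynomial (Fin 3) ℂ) : MvPowerSeries (Fin 3) ℂ)) with hJ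
  set I : Ideal R3 := Ideal.span {xx, u, B, zz ^ 3} with hI
  -- the generators, inside J
  have hG0 : (2 * xx : R3) ∈ J := by
    rw [← G0cast a1 a2 a8 t]; exact Ideal.subset_span ⟨0, rfl⟩
  have hG1 : (CC a2 * zz ^ 2 + 2 * CC a8 * yy * zz : R3) ∈ J := by
    rw [← G1cast a1 a2 a8 t]; exact Ideal.subset_span ⟨1, rfl⟩
  have hG2 : (CC a8 * yy ^ 2 + 2 * CC a2 * yy * zz - 3 * CC t * zz ^ 2
      - CC a1 ^ 2 * zz ^ 3 : R3) ∈ J := by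
    rw [← G2cast a1 a2 a8 t]; exact Ideal.subset_span ⟨2, rfl⟩
  -- step 1 : xx ∈ J
  have hxJ : xx ∈ J := by
    have : xx = CC (1/2) * (2 * xx) := by
      linear_combination (-xx) * C4
    rw [this]; exact Ideal.mul_mem_left _ _ hG0
  -- step 2 : u ∈ J
  have huJ : u ∈ J := by
    have : u = CC (1/(2*a8)) * (CC a2 * zz ^ 2 + 2 * CC a8 * yy * zz) := by
      rw [hu]
      linear_combination (-(yy*zz)) * C5 + (-(zz^2)) * C6
    rw [this]; exact Ideal.mul_mem_left _ _ hG1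
  -- step 3 : zz ^ 3 ∈ J
  have hz3J : (zz ^ 3 : R3) ∈ J := by
    have hWmem : (CC k * zz ^ 3 - CC a1 ^ 2 * zz ^ 4 : R3) ∈ J := by
      have hWeq : (CC k * zz ^ 3 - CC a1 ^ 2 * zz ^ 4 : R3)
          = zz * (CC a8 * yy ^ 2 + 2 * CC a2 * yy * zz - 3 * CC t * zz ^ 2
              - CC a1 ^ 2 * zz ^ 3)
            + (CC a8 * CC c2 - 2 * CC a2) * (zz * u) - CC a8 * (yy * u) := by
        rw [hu]
        linear_combination (-(zz^3)) * C3
      rw [hWeq]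
      exact sub_mem (add_mem (Ideal.mul_mem_left _ _ hG2)
        (Ideal.mul_mem_left _ _ (Ideal.mul_mem_left _ _ huJ)))
        (Ideal.mul_mem_left _ _ (Ideal.mul_mem_left _ _ huJ))
    set V : R3 := CC k - CC a1 ^ 2 * zz with hV
    have hVc : MvPowerSeries.constantCoeff V = k := by
      rw [hV, map_sub, map_mul]
      simp [CC, zz]
    have hfact : (CC k * zz ^ 3 - CC a1 ^ 2 * zz ^ 4 : R3) = zz ^ 3 * V := by
      rw [hV]; ring
    have : (zz ^ 3 : R3) = (CC k * zz ^ 3 - CC a1 ^ 2 * zz ^ 4) * V⁻¹ := by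
      rw [hfact, mul_assoc, MvPowerSeries.mul_inv_cancel _ (by rw [hVc]; exact hk), mul_one]
    rw [this]
    exact Ideal.mul_mem_right _ _ hWmem
  -- step 4 : B ∈ J
  have hBJ : B ∈ J := by
    have hab : CC a8 * B = (CC a8 * yy ^ 2 + 2 * CC a2 * yy * zz - 3 * CC t * zz ^ 2
        - CC a1 ^ 2 * zz ^ 3) - 2 * CC a2 * u + CC a1 ^ 2 * zz ^ 3 := by
      rw [hu, hB]
      linear_combination (zz^2) * C2
    have hmem : CC a8 * B ∈ J :=
      hab ▸ add_mem (sub_mem hG2 (Ideal.mul_mem_left _ _ huJ))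
        (Ideal.mul_mem_left _ _ hz3J)
    have : B = CC (1/a8) * (CC a8 * B) := by
      linear_combination (-B) * C7
    rw [this]
    exact Ideal.mul_mem_left _ _ hmem
  -- now the two inclusions
  apply le_antisymm
  · rw [hJ, Ideal.span_le]
    rintro p ⟨i, rfl⟩
    have m0 : ((pderiv 0 (gDL a1 a2 a8 t) : MvPolynomial (Fin 3) ℂ) : R3) ∈ I := by
      rw [G0cast]
      exact Ideal.mul_mem_left _ _ (Ideal.subset_span (by simp))
    have m1 : ((pderiv 1 (gDL a1 a2 a8 t) : MvPolynomial (Fin 3) ℂ) : R3) ∈ I := by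
      rw [G1cast]
      have huI : u ∈ I := Ideal.subset_span (by simp)
      have : (CC a2 * zz ^ 2 + 2 * CC a8 * yy * zz : R3) = 2 * CC a8 * u := by
        rw [hu]; linear_combination (zz^2) * C1
      rw [this]; exact Ideal.mul_mem_left _ _ huI
    have m2 : ((pderiv 2 (gDL a1 a2 a8 t) : MvPolynomial (Fin 3) ℂ) : R3) ∈ I := by
      rw [G2cast]
      have huI : u ∈ I := Ideal.subset_span (by simp)
      have hBI : B ∈ I := Ideal.subset_span (by simp)
      have hz3I : (zz ^ 3 : R3) ∈ I := Ideal.subset_span (by simp)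
      have : (CC a8 * yy ^ 2 + 2 * CC a2 * yy * zz - 3 * CC t * zz ^ 2
          - CC a1 ^ 2 * zz ^ 3 : R3)
          = CC a8 * B + 2 * CC a2 * u - CC a1 ^ 2 * zz ^ 3 := by
        rw [hu, hB]; linear_combination (-(zz^2)) * C2
      rw [this]
      exact sub_mem (add_mem (Ideal.mul_mem_left _ _ hBI) (Ideal.mul_mem_left _ _ huI))
        (Ideal.mul_mem_left _ _ hz3I)
    fin_cases i
    · exact m0
    · exact m1
    · exact m2
  · rw [hI, Ideal.span_le]
    rintro p hp
    simp only [Set.mem_insert_iff, Set.mem_singleton_iff] at hp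
    rcases hp with rfl | rfl | rfl | rfl
    · exact hxJ
    · exact huJ
    · exact hBJ
    · exact hz3J

lemma span_case2 (h8 : a8 ≠ 0) (h1 : a1 ≠ 0) (hD : -4 * a8 * t - a2 ^ 2 = 0) :
    Ideal.span (Set.range fun i : Fin 3 =>
        ((pderiv i (gDL a1 a2 a8 t) : MvPolynomial (Fin 3) ℂ) : MvPowerSeries (Fin 3) ℂ))
      = Ideal.span {xx, yy * zz + CC (a2 / (2 * a8)) * zz ^ 2,
          yy ^ 2 - CC ((a2 ^ 2 + 3 * t * a8) / a8 ^ 2) * zz ^ 2 - CC (a1 ^ 2 / a8) * zz ^ 3,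
          zz ^ 4} := by
  classical
  set c2 : ℂ := a2 / (2 * a8) with hc2def
  set c : ℂ := (a2 ^ 2 + 3 * t * a8) / a8 ^ 2 with hcdef
  set c3 : ℂ := a1 ^ 2 / a8 with hc3def
  -- scalar identities
  have i1 : a2 = 2 * a8 * c2 := by rw [hc2def]; field_simp
  have i2 : 2 * a2 * c2 - a8 * c = -(3 * t) := by
    rw [hc2def, hcdef]; field_simp; ring
  have i3 : a8 * c2 ^ 2 - 2 * a2 * c2 - 3 * t = 0 := by
    rw [hc2def]; field_simp; linear_combination (3) * hD
  have i4 : (1 : ℂ) / 2 * 2 = 1 := by norm_num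
  have i5 : (1 : ℂ) / (2 * a8) * (2 * a8) = 1 := by field_simp
  have i6 : (1 : ℂ) / (2 * a8) * a2 = c2 := by rw [hc2def]; field_simp
  have i7 : (1 : ℂ) / a8 * a8 = 1 := by field_simp
  have i8 : a8 * c3 = a1 ^ 2 := by rw [hc3def]; field_simp
  have i9 : -(1/a1^2) * -(a1^2) = 1 := by field_simp
  -- CC versions
  have C1 : CC a2 = 2 * CC a8 * CC c2 := by
    simp only [htwo, ← map_mul]; exact CCmap i1
  have C2 : 2 * CC a2 * CC c2 - CC a8 * CC c = -(3 * CC t) := by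
    simp only [htwo, hthree, ← map_mul, ← map_sub, ← map_neg]; exact CCmap i2
  have C3 : CC a8 * CC c2 ^ 2 - 2 * CC a2 * CC c2 - 3 * CC t = 0 := by
    have : CC a8 * CC c2 ^ 2 - 2 * CC a2 * CC c2 - 3 * CC t = CC 0 := by
      simp only [htwo, hthree, ← map_pow, ← map_mul, ← map_sub]; exact CCmap i3
    rw [this, map_zero]
  have C4 : CC (1/2) * 2 = 1 := by
    simp only [htwo, hone, ← map_mul]; exact CCmap i4
  have C5 : CC (1/(2*a8)) * (2 * CC a8) = 1 := by
    simp only [htwo, hone, ← map_mul]; exact CCmap i5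
  have C6 : CC (1/(2*a8)) * CC a2 = CC c2 := by
    simp only [← map_mul]; exact CCmap i6
  have C7 : CC (1/a8) * CC a8 = 1 := by
    simp only [hone, ← map_mul]; exact CCmap i7
  have C8 : CC a8 * CC c3 = CC a1 ^ 2 := by
    simp only [← map_pow, ← map_mul]; exact CCmap i8
  have C9 : CC (-(1/a1^2)) * (-(CC a1 ^ 2)) = 1 := by
    simp only [hone, ← map_pow, ← map_neg, ← map_mul]; exact CCmap i9
  set u : R3 := yy * zz + CC c2 * zz ^ 2 with hu
  set B : R3 := yy ^ 2 - CC c * zz ^ 2 - CC c3 * zz ^ 3 with hB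
  set J : Ideal R3 := Ideal.span (Set.range fun i : Fin 3 =>
      ((pderiv i (gDL a1 a2 a8 t) : MvPolynomial (Fin 3) ℂ) : MvPowerSeries (Fin 3) ℂ)) with hJ
  set I : Ideal R3 := Ideal.span {xx, u, B, zz ^ 4} with hI
  -- the generators, inside J
  have hG0 : (2 * xx : R3) ∈ J := by
    rw [← G0cast a1 a2 a8 t]; exact Ideal.subset_span ⟨0, rfl⟩
  have hG1 : (CC a2 * zz ^ 2 + 2 * CC a8 * yy * zz : R3) ∈ J := by
    rw [← G1cast a1 a2 a8 t]; exact Ideal.subset_span ⟨1, rfl⟩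
  have hG2 : (CC a8 * yy ^ 2 + 2 * CC a2 * yy * zz - 3 * CC t * zz ^ 2
      - CC a1 ^ 2 * zz ^ 3 : R3) ∈ J := by
    rw [← G2cast a1 a2 a8 t]; exact Ideal.subset_span ⟨2, rfl⟩
  have hxJ : xx ∈ J := by
    have : xx = CC (1/2) * (2 * xx) := by
      linear_combination (-xx) * C4
    rw [this]; exact Ideal.mul_mem_left _ _ hG0
  have huJ : u ∈ J := by
    have : u = CC (1/(2*a8)) * (CC a2 * zz ^ 2 + 2 * CC a8 * yy * zz) := by
      rw [hu]
      linear_combination (-(yy*zz)) * C5 + (-(zz^2)) * C6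
    rw [this]; exact Ideal.mul_mem_left _ _ hG1
  have hz4J : (zz ^ 4 : R3) ∈ J := by
    have hWmem : (-(CC a1 ^ 2) * zz ^ 4 : R3) ∈ J := by
      have hWeq : (-(CC a1 ^ 2) * zz ^ 4 : R3)
          = zz * (CC a8 * yy ^ 2 + 2 * CC a2 * yy * zz - 3 * CC t * zz ^ 2
              - CC a1 ^ 2 * zz ^ 3)
            + (CC a8 * CC c2 - 2 * CC a2) * (zz * u) - CC a8 * (yy * u) := by
        rw [hu]
        linear_combination (-(zz^3)) * C3
      rw [hWeq]
      exact sub_mem (add_mem (Ideal.mul_mem_left _ _ hG2)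
        (Ideal.mul_mem_left _ _ (Ideal.mul_mem_left _ _ huJ)))
        (Ideal.mul_mem_left _ _ (Ideal.mul_mem_left _ _ huJ))
    have : (zz ^ 4 : R3) = CC (-(1/a1^2)) * (-(CC a1 ^ 2) * zz ^ 4) := by
      linear_combination (-(zz^4)) * C9
    rw [this]
    exact Ideal.mul_mem_left _ _ hWmem
  have hBJ : B ∈ J := by
    have hab : CC a8 * B = (CC a8 * yy ^ 2 + 2 * CC a2 * yy * zz - 3 * CC t * zz ^ 2
        - CC a1 ^ 2 * zz ^ 3) - 2 * CC a2 * u := by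
      rw [hu, hB]
      linear_combination (zz^2) * C2 + (-(zz^3)) * C8
    have hmem : CC a8 * B ∈ J :=
      hab ▸ sub_mem hG2 (Ideal.mul_mem_left _ _ huJ)
    have : B = CC (1/a8) * (CC a8 * B) := by
      linear_combination (-B) * C7
    rw [this]
    exact Ideal.mul_mem_left _ _ hmem
  apply le_antisymm
  · rw [hJ, Ideal.span_le]
    rintro p ⟨i, rfl⟩
    have m0 : ((pderiv 0 (gDL a1 a2 a8 t) : MvPolynomial (Fin 3) ℂ) : R3) ∈ I := by
      rw [G0cast]
      exact Ideal.mul_mem_left _ _ (Ideal.subset_span (by simp))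
    have m1 : ((pderiv 1 (gDL a1 a2 a8 t) : MvPolynomial (Fin 3) ℂ) : R3) ∈ I := by
      rw [G1cast]
      have huI : u ∈ I := Ideal.subset_span (by simp)
      have : (CC a2 * zz ^ 2 + 2 * CC a8 * yy * zz : R3) = 2 * CC a8 * u := by
        rw [hu]; linear_combination (zz^2) * C1
      rw [this]; exact Ideal.mul_mem_left _ _ huI
    have m2 : ((pderiv 2 (gDL a1 a2 a8 t) : MvPolynomial (Fin 3) ℂ) : R3) ∈ I := by
      rw [G2cast]
      have huI : u ∈ I := Ideal.subset_span (by simp)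
      have hBI : B ∈ I := Ideal.subset_span (by simp)
      have : (CC a8 * yy ^ 2 + 2 * CC a2 * yy * zz - 3 * CC t * zz ^ 2
          - CC a1 ^ 2 * zz ^ 3 : R3)
          = CC a8 * B + 2 * CC a2 * u := by
        rw [hu, hB]; linear_combination (-(zz^2)) * C2 + (zz^3) * C8
      rw [this]
      exact add_mem (Ideal.mul_mem_left _ _ hBI) (Ideal.mul_mem_left _ _ huI)
    fin_cases i
    · exact m0
    · exact m1
    · exact m2
  · rw [hI, Ideal.span_le]
    rintro p hp
    simp only [Set.mem_insert_iff, Set.mem_singleton_iff] at hp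
    rcases hp with rfl | rfl | rfl | rfl
    · exact hxJ
    · exact huJ
    · exact hBJ
    · exact hz4J

end Spans

lemma finrank_congr {I J : Ideal R3} (h : I = J) :
    Module.finrank ℂ (R3 ⧸ I) = Module.finrank ℂ (R3 ⧸ J) := by subst h; rfl

end GDLProof

/-- With `a₈ ≠ 0` and `a₁ ≠ 0`: if `-4a₈t - a₂² ≠ 0` then `g` has Milnor number `4`
at the origin (type `D₄`); if `-4a₈t - a₂² = 0` then it has Milnor number `5`
(type `D₅`). -/
theorem gDL_D4_D5 (a1 a2 a8 t : ℂ) (h8 : a8 ≠ 0) (h1 : a1 ≠ 0) :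
    (-4 * a8 * t - a2 ^ 2 ≠ 0 → milnorAtOrigin (gDL a1 a2 a8 t) = 4) ∧
    (-4 * a8 * t - a2 ^ 2 = 0 → milnorAtOrigin (gDL a1 a2 a8 t) = 5) := by
  constructor
  · intro hD
    exact (GDLProof.finrank_congr (GDLProof.span_case1 a1 a2 a8 t h8 hD)).trans
      (GDLProof.dim_case1 _ _)
  · intro hD
    have hcc : (a2 ^ 2 + 3 * t * a8) / a8 ^ 2 = (a2 / (2 * a8)) ^ 2 := by
      field_simp
      linear_combination (-3) * hD
    exact (GDLProof.finrank_congr (GDLProof.span_case2 a1 a2 a8 t h8 h1 hD)).trans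
      (GDLProof.dim_case2 _ _ _ hcc)
end
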